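/- Suppose the summands of an absolutely monotonic power series I(x) concentrate exponentially near n ≈ f(x) with window term C x^{-ν} and parameters (α, β). Then for any subpolynomial sequence {b_n} and any α' ∈ (0, α), as x → +∞, (1/I(x)) Σ_{n=0}^{n_-(x)} b_n a_n x^n = O(e^{-α' x^β}) and (1/I(x)) Σ_{n=n_+(x)}^{∞} b_n a_n x^n = O(e^{-α' x^β}). -/

import Mathlib

open Filter Asymptotics Polynomial

noncomputable def Iser (a : ℕ → ℝ) (x : ℝ) : ℝ := ∑' n : ℕ, a n * x ^ n

noncomputable def sumLE (a : ℕ → ℝ) (x y : ℝ) : ℝ :=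
  ∑' n : ℕ, if (n : ℤ) ≤ ⌊y⌋ then a n * x ^ n else 0

noncomputable def sumGE (a : ℕ → ℝ) (x y : ℝ) : ℝ :=
  ∑' n : ℕ, if ⌊y⌋ ≤ (n : ℤ) then a n * x ^ n else 0

/-- `I(x) = Σ aₙ xⁿ` is absolutely monotonic: all coefficients are nonnegative and
the series converges for every `x > 0`. -/
def AbsMono (a : ℕ → ℝ) : Prop :=
  (∀ n, 0 ≤ a n) ∧ ∀ x : ℝ, 0 < x → Summable fun n : ℕ => a n * x ^ n

/-- The summands of `Σ aₙ xⁿ` concentrate superpolynomially near `n ≈ f(x)` with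
window term `C x^{-ν}`. -/
def SuperConc (a : ℕ → ℝ) (f : ℝ → ℝ) (C ν : ℝ) : Prop :=
  ∀ p : ℝ, 0 < p →
    ((fun x : ℝ => sumLE a x (f x * (1 - C * x ^ (-ν))) / Iser a x)
        =o[atTop] fun x : ℝ => x ^ (-p)) ∧
    ((fun x : ℝ => sumGE a x (f x * (1 + C * x ^ (-ν))) / Iser a x)
        =o[atTop] fun x : ℝ => x ^ (-p))

/-- The summands of `Σ aₙ xⁿ` concentrate exponentially near `n ≈ f(x)` with
window term `C x^{-ν}` and parameters `(α, β)`. -/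
def ExpConc (a : ℕ → ℝ) (f : ℝ → ℝ) (C ν α β : ℝ) : Prop :=
  ((fun x : ℝ => sumLE a x (f x * (1 - C * x ^ (-ν))) / Iser a x)
      =O[atTop] fun x : ℝ => Real.exp (-α * x ^ β)) ∧
  ((fun x : ℝ => sumGE a x (f x * (1 + C * x ^ (-ν))) / Iser a x)
      =O[atTop] fun x : ℝ => Real.exp (-α * x ^ β))

/-- A real sequence is subpolynomial if `bₙ / n^p → 0` for every `p > 0`. -/
def Subpoly (b : ℕ → ℝ) : Prop :=
  ∀ p : ℝ, 0 < p → Tendsto (fun n : ℕ => b n / (n : ℝ) ^ p) atTop (nhds 0)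

open Real in
lemma exists_B (b : ℕ → ℝ) (hb : Subpoly b) : ∃ B : ℝ, 1 ≤ B ∧ ∀ n : ℕ, |b n| ≤ B * (1 + n) := by
  have h := ((hb 1 one_pos).abs).eventually_lt_const (by norm_num : (|(0:ℝ)| < 1))
  obtain ⟨N, hN⟩ := eventually_atTop.1 h
  set N' := max N 1 with hN'
  have hsum : (0:ℝ) ≤ ∑ i ∈ Finset.range N', |b i| :=
    Finset.sum_nonneg (fun i _ => abs_nonneg (b i))
  refine ⟨1 + ∑ i ∈ Finset.range N', |b i|, by linarith, fun n => ?_⟩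
  by_cases hn : n < N'
  · have h1 : |b n| ≤ ∑ i ∈ Finset.range N', |b i| :=
      Finset.single_le_sum (f := fun i => |b i|) (fun i _ => abs_nonneg _) (Finset.mem_range.2 hn)
    have h2 : (1:ℝ) ≤ 1 + n := by have : (0:ℝ) ≤ n := Nat.cast_nonneg n; linarith
    nlinarith
  · push_neg at hn
    have hn1 : 1 ≤ n := le_trans (le_max_right N 1) hn
    have hb1 := hN n (le_trans (le_max_left N 1) hn)
    rw [abs_div] at hb1
    have hnp : (0:ℝ) < (n:ℝ) ^ (1:ℝ) := by
      apply rpow_pos_of_pos; exact_mod_cast hn1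
    have h3 : |b n| < |(n:ℝ) ^ (1:ℝ)| := (div_lt_one (abs_pos.2 hnp.ne')).1 hb1
    rw [abs_of_pos hnp, rpow_one] at h3
    nlinarith [abs_nonneg (b n)]

lemma Iser_pos (a : ℕ → ℝ) (ha : AbsMono a) (m : ℕ) (hm : a m ≠ 0) {x : ℝ} (hx : 0 < x) :
    0 < Iser a x := by
  have ham : 0 < a m := lt_of_le_of_ne (ha.1 m) (Ne.symm hm)
  have h1 : a m * x ^ m ≤ Iser a x :=
    Summable.le_tsum (ha.2 x hx) m (fun j _ => mul_nonneg (ha.1 j) (pow_nonneg hx.le j))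
  have : 0 < a m * x ^ m := mul_pos ham (pow_pos hx m)
  linarith

lemma summable_weight (a : ℕ → ℝ) (ha : AbsMono a) {x : ℝ} (hx : 0 < x) :
    Summable fun n : ℕ => (1 + (n:ℝ)) * (a n * x ^ n) := by
  refine Summable.of_nonneg_of_le (fun n => ?_) (fun n => ?_) (ha.2 (2*x) (by linarith))
  · have := ha.1 n
    positivity
  · have h : (1 + (n:ℝ)) ≤ (1+1:ℝ) ^ n := by
      have := one_add_mul_le_pow (a := (1:ℝ)) (by norm_num) n
      simpa [mul_comm] using this
    calc (1 + (n:ℝ)) * (a n * x ^ n) ≤ (1+1:ℝ) ^ n * (a n * x ^ n) := by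
          apply mul_le_mul_of_nonneg_right h
          have := ha.1 n; positivity
      _ = a n * (2*x) ^ n := by rw [mul_pow]; norm_num; ring

lemma summable_ite (a : ℕ → ℝ) (ha : AbsMono a) {x : ℝ} (hx : 0 < x) (p : ℕ → Prop)
    [DecidablePred p] : Summable fun n : ℕ => if p n then a n * x ^ n else 0 := by
  refine Summable.of_nonneg_of_le (fun n => ?_) (fun n => ?_) (ha.2 x hx)
  · split_ifs
    · exact mul_nonneg (ha.1 n) (pow_nonneg hx.le n)
    · exact le_rfl
  · split_ifs
    · exact le_rfl
    · exact mul_nonneg (ha.1 n) (pow_nonneg hx.le n)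

lemma summable_ite_weight (a : ℕ → ℝ) (ha : AbsMono a) {x : ℝ} (hx : 0 < x) (p : ℕ → Prop)
    [DecidablePred p] :
    Summable fun n : ℕ => if p n then (1 + (n:ℝ)) * (a n * x ^ n) else 0 := by
  refine Summable.of_nonneg_of_le (fun n => ?_) (fun n => ?_) (summable_weight a ha hx)
  · split_ifs
    · have := ha.1 n; positivity
    · exact le_rfl
  · split_ifs
    · exact le_rfl
    · have := ha.1 n; positivity

lemma feval_bounds (f : Polynomial ℝ) (hlead : 0 < f.leadingCoeff) :
    ∀ᶠ x : ℝ in atTop, (f.leadingCoeff/2) * x ^ f.natDegree ≤ f.eval x ∧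
      f.eval x ≤ (2*f.leadingCoeff) * x ^ f.natDegree ∧ 0 < f.eval x := by
  have h := (Polynomial.isEquivalent_atTop_lead f).def (by norm_num : (0:ℝ) < 1/2)
  filter_upwards [h, eventually_gt_atTop 0] with x hx hx0
  have hpow : (0:ℝ) < x ^ f.natDegree := pow_pos hx0 _
  have hn : ‖f.eval x - f.leadingCoeff * x ^ f.natDegree‖ ≤
      (1/2) * ‖f.leadingCoeff * x ^ f.natDegree‖ := hx
  rw [Real.norm_eq_abs, Real.norm_eq_abs, abs_of_pos (mul_pos hlead hpow)] at hn
  have h2 := abs_le.1 hn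
  refine ⟨by nlinarith [h2.1, h2.2], by nlinarith [h2.1, h2.2], by nlinarith [h2.1, h2.2]⟩

open Topology
open Real in
lemma poly_exp_small (P δ β : ℝ) (hδ : 0 < δ) (hβ : 0 < β) :
    ∀ᶠ x : ℝ in atTop, x ^ P * Real.exp (-δ * x ^ β) ≤ 1 := by
  have h0 := tendsto_rpow_mul_exp_neg_mul_atTop_nhds_zero (P/β) δ hδ
  have h1 : Tendsto (fun x : ℝ => (x ^ β) ^ (P/β) * Real.exp (-δ * x ^ β)) atTop (𝓝 0) :=
    h0.comp (tendsto_rpow_atTop hβ)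
  have h2 : Tendsto (fun x : ℝ => x ^ P * Real.exp (-δ * x ^ β)) atTop (𝓝 0) := by
    apply h1.congr'
    filter_upwards [eventually_gt_atTop 0] with x hx
    rw [← Real.rpow_mul hx.le, mul_div_cancel₀ _ hβ.ne']
  filter_upwards [h2.eventually_lt_const (by norm_num : (0:ℝ) < 1)] with x hx using hx.le

open Real in
lemma Cx_small (C ν : ℝ) (hC : 0 < C) (hν : 0 < ν) :
    ∀ᶠ x : ℝ in atTop, C * x ^ (-ν) ≤ 1 := by
  have h : Tendsto (fun x : ℝ => C * x ^ (-ν)) atTop (𝓝 0) := by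
    have := (tendsto_rpow_neg_atTop hν).const_mul C
    simpa using this
  filter_upwards [h.eventually_lt_const (by norm_num : (0:ℝ) < 1)] with x hx using hx.le

lemma bern (ε : ℝ) (hε0 : 0 < ε) (hε1 : ε ≤ 1) (n : ℕ) :
    ε * (1 + (n:ℝ)) ≤ (1 + ε) ^ n := by
  have h := one_add_mul_le_pow (a := ε) (by linarith) n
  nlinarith [Nat.cast_nonneg (α := ℝ) n]

open Real in
lemma head_aux (a b : ℕ → ℝ) (f : Polynomial ℝ) (C ν α β : ℝ)
    (hC : 0 < C) (hν : 0 < ν) (hα : 0 < α) (hβ : 0 < β)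
    (ha : AbsMono a) (m : ℕ) (hm : a m ≠ 0) (hlead : 0 < f.leadingCoeff)
    (hconc1 : (fun x : ℝ => sumLE a x (f.eval x * (1 - C * x ^ (-ν))) / Iser a x)
      =O[atTop] fun x : ℝ => Real.exp (-α * x ^ β))
    (B : ℝ) (hB0 : 1 ≤ B) (hB : ∀ n : ℕ, |b n| ≤ B * (1 + n))
    (α' : ℝ) (hα'0 : 0 < α') (hα'α : α' < α) :
    (fun x : ℝ => sumLE (fun n => b n * a n) x (f.eval x * (1 - C * x ^ (-ν))) / Iser a x)
      =O[atTop] fun x : ℝ => Real.exp (-α' * x ^ β) := by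
  set d := f.natDegree with hd
  set lc := f.leadingCoeff with hlc
  set P : ℝ := (d:ℝ) + 1 with hP
  obtain ⟨c₁, hc₁0, hc₁⟩ := hconc1.exists_pos
  rw [Asymptotics.isBigO_iff]
  refine ⟨B * (1 + 2*lc) * c₁, ?_⟩
  filter_upwards [eventually_ge_atTop 1, feval_bounds f hlead, Cx_small C ν hC hν,
      hc₁.bound, poly_exp_small P (α - α') β (by linarith) hβ] with x h1 hf hCx1 hc1x hsmall
  have hx0 : (0:ℝ) < x := lt_of_lt_of_le one_pos h1
  have hI : 0 < Iser a x := Iser_pos a ha m hm hx0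
  set gm : ℝ := f.eval x * (1 - C * x ^ (-ν)) with hgm
  have hCx0 : 0 ≤ C * x ^ (-ν) := by positivity
  have hgm_le : gm ≤ f.eval x := by
    rw [hgm]
    nlinarith [hf.2.2]
  -- termwise bound on the numerator
  have hterm : ∀ n : ℕ, ‖(if (n:ℤ) ≤ ⌊gm⌋ then (b n * a n) * x ^ n else 0)‖ ≤
      (B * (1 + f.eval x)) * (if (n:ℤ) ≤ ⌊gm⌋ then a n * x ^ n else 0) := by
    intro n
    split_ifs with h
    · have hax : 0 ≤ a n * x ^ n := mul_nonneg (ha.1 n) (pow_nonneg hx0.le n)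
      have hn_le : (n:ℝ) ≤ f.eval x := le_trans (by exact_mod_cast Int.le_floor.1 h) hgm_le
      have : ‖b n * a n * x ^ n‖ = |b n| * (a n * x ^ n) := by
        rw [Real.norm_eq_abs, mul_assoc, abs_mul, abs_of_nonneg hax]
      rw [this]
      have h2 := hB n
      have h3 : |b n| * (a n * x ^ n) ≤ (B * (1 + n)) * (a n * x ^ n) :=
        mul_le_mul_of_nonneg_right h2 hax
      refine le_trans h3 ?_
      apply mul_le_mul_of_nonneg_right _ hax
      have : (1:ℝ) + n ≤ 1 + f.eval x := by linarith
      nlinarith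
    · simp
  have hsummable_bound : Summable fun n : ℕ => (B * (1 + f.eval x)) *
      (if (n:ℤ) ≤ ⌊gm⌋ then a n * x ^ n else 0) :=
    (summable_ite a ha hx0 (fun n => (n:ℤ) ≤ ⌊gm⌋)).mul_left _
  have hsummable_norm : Summable fun n : ℕ =>
      ‖(if (n:ℤ) ≤ ⌊gm⌋ then (b n * a n) * x ^ n else 0)‖ := by
    refine Summable.of_nonneg_of_le (fun n => norm_nonneg _) hterm hsummable_bound
  have hnum : ‖sumLE (fun n => b n * a n) x gm‖ ≤
      (B * (1 + f.eval x)) * sumLE a x gm := by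
    calc ‖sumLE (fun n => b n * a n) x gm‖
        ≤ ∑' n : ℕ, ‖(if (n:ℤ) ≤ ⌊gm⌋ then (b n * a n) * x ^ n else 0)‖ :=
          norm_tsum_le_tsum_norm hsummable_norm
      _ ≤ ∑' n : ℕ, (B * (1 + f.eval x)) * (if (n:ℤ) ≤ ⌊gm⌋ then a n * x ^ n else 0) :=
          Summable.tsum_le_tsum hterm hsummable_norm hsummable_bound
      _ = (B * (1 + f.eval x)) * sumLE a x gm := tsum_mul_left
  -- ratio bound
  have hratio : sumLE a x gm / Iser a x ≤ c₁ * Real.exp (-α * x ^ β) := by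
    have h0 : 0 ≤ sumLE a x gm / Iser a x := by
      apply div_nonneg _ hI.le
      apply tsum_nonneg
      intro n
      split_ifs
      · exact mul_nonneg (ha.1 n) (pow_nonneg hx0.le n)
      · exact le_rfl
    have := hc1x
    rw [Real.norm_eq_abs, Real.norm_eq_abs, abs_of_nonneg h0,
      abs_of_pos (Real.exp_pos _)] at this
    exact this
  have hxP1 : (1:ℝ) ≤ x ^ P := Real.one_le_rpow h1 (by positivity)
  have hxdP : x ^ d ≤ x ^ P := by
    rw [← Real.rpow_natCast x d]
    exact Real.rpow_le_rpow_of_exponent_le h1 (by rw [hP]; linarith)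
  have hfP : 1 + f.eval x ≤ (1 + 2*lc) * x ^ P := by
    have h2 := hf.2.1
    have hlc' : 0 < lc := hlead
    nlinarith [pow_pos hx0 d]
  -- final assembly
  have hLHS : ‖sumLE (fun n => b n * a n) x gm / Iser a x‖ =
      ‖sumLE (fun n => b n * a n) x gm‖ / Iser a x := by
    rw [norm_div, Real.norm_eq_abs (Iser a x), abs_of_pos hI]
  rw [hLHS]
  have hsumLE_nonneg : 0 ≤ sumLE a x gm := by
    apply tsum_nonneg
    intro n
    split_ifs
    · exact mul_nonneg (ha.1 n) (pow_nonneg hx0.le n)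
    · exact le_rfl
  have hstep : ‖sumLE (fun n => b n * a n) x gm‖ / Iser a x ≤
      (B * (1 + f.eval x)) * (sumLE a x gm / Iser a x) := by
    rw [div_le_iff₀ hI, mul_assoc, div_mul_cancel₀ _ hI.ne']
    exact hnum
  have hBpos : 0 < B := lt_of_lt_of_le one_pos hB0
  have hexp : Real.exp (-α * x ^ β) =
      Real.exp (-(α - α') * x ^ β) * Real.exp (-α' * x ^ β) := by
    rw [← Real.exp_add]; ring_nf
  calc ‖sumLE (fun n => b n * a n) x gm‖ / Iser a x
      ≤ (B * (1 + f.eval x)) * (sumLE a x gm / Iser a x) := hstep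
    _ ≤ (B * ((1 + 2*lc) * x ^ P)) * (c₁ * Real.exp (-α * x ^ β)) := by
        apply mul_le_mul
        · apply mul_le_mul_of_nonneg_left hfP hBpos.le
        · exact hratio
        · apply div_nonneg hsumLE_nonneg hI.le
        · positivity
    _ = (B * (1 + 2*lc) * c₁) * (x ^ P * Real.exp (-(α - α') * x ^ β)) *
          Real.exp (-α' * x ^ β) := by rw [hexp]; ring
    _ ≤ (B * (1 + 2*lc) * c₁) * 1 * Real.exp (-α' * x ^ β) := by
        have hpos : (0:ℝ) < B * (1 + 2*lc) * c₁ := by positivity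
        apply mul_le_mul_of_nonneg_right _ (Real.exp_pos _).le
        exact mul_le_mul_of_nonneg_left hsmall hpos.le
    _ ≤ (B * (1 + 2*lc) * c₁) * ‖Real.exp (-α' * x ^ β)‖ := by
        rw [Real.norm_eq_abs, abs_of_pos (Real.exp_pos _), mul_one]

lemma sumGE_nonneg (a : ℕ → ℝ) (ha : AbsMono a) {x : ℝ} (hx : 0 ≤ x) (t : ℝ) :
    0 ≤ sumGE a x t := by
  apply tsum_nonneg
  intro n
  split_ifs
  · exact mul_nonneg (ha.1 n) (pow_nonneg hx n)
  · exact le_rfl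

set_option maxHeartbeats 1000000 in
open Real Topology in
lemma tail_aux (a b : ℕ → ℝ) (f : Polynomial ℝ) (C ν α β : ℝ)
    (hC : 0 < C) (hν : 0 < ν) (hα : 0 < α) (hβ : 0 < β)
    (ha : AbsMono a) (m : ℕ) (hm : a m ≠ 0) (hlead : 0 < f.leadingCoeff)
    (hconc2 : (fun x : ℝ => sumGE a x (f.eval x * (1 + C * x ^ (-ν))) / Iser a x)
      =O[atTop] fun x : ℝ => Real.exp (-α * x ^ β))
    (B : ℝ) (hB0 : 1 ≤ B) (hB : ∀ n : ℕ, |b n| ≤ B * (1 + n))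
    (α' : ℝ) (hα'0 : 0 < α') (hα'α : α' < α) :
    (fun x : ℝ => sumGE (fun n => b n * a n) x (f.eval x * (1 + C * x ^ (-ν))) / Iser a x)
      =O[atTop] fun x : ℝ => Real.exp (-α' * x ^ β) := by
  set d := f.natDegree with hd
  set lc := f.leadingCoeff with hlc
  set P : ℝ := (d:ℝ) + 1 with hP
  set K : ℝ := 4 * lc * 2 ^ d with hK
  set Q : ℝ := 4 * lc * 2 ^ d + 1 with hQ
  have hlc0 : (0:ℝ) < lc := hlead
  set y : ℝ → ℝ := fun x => x * (1 + x ^ (-P)) with hy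
  have hy_ge : ∀ᶠ x : ℝ in atTop, x ≤ y x := by
    filter_upwards [eventually_ge_atTop 1] with x h1
    have hx0 : (0:ℝ) < x := lt_of_lt_of_le one_pos h1
    have h2 : (0:ℝ) < x ^ (-P) := Real.rpow_pos_of_pos hx0 _
    show x ≤ x * (1 + x ^ (-P))
    calc x = x * 1 := (mul_one x).symm
      _ ≤ x * (1 + x ^ (-P)) := by
          apply mul_le_mul_of_nonneg_left _ hx0.le
          linarith
  have hy_tendsto : Filter.Tendsto y Filter.atTop Filter.atTop :=
    tendsto_atTop_mono' _ hy_ge tendsto_id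
  obtain ⟨c₁, hc₁0, hc₁⟩ := hconc2.exists_pos
  obtain ⟨c₂, hc₂0, hc₂⟩ := (hconc2.comp_tendsto hy_tendsto).exists_pos
  -- eventually the tail is at most half of Iser
  have hhalf : ∀ᶠ z : ℝ in atTop,
      sumGE a z (f.eval z * (1 + C * z ^ (-ν))) ≤ (1/2) * Iser a z := by
    have hexp0 : Filter.Tendsto (fun z : ℝ => Real.exp (-α * z ^ β)) atTop (𝓝 0) := by
      apply Real.tendsto_exp_atBot.comp
      have h1 : Filter.Tendsto (fun z : ℝ => α * z ^ β) atTop atTop :=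
        (tendsto_rpow_atTop hβ).const_mul_atTop hα
      have h2 : Filter.Tendsto (fun z : ℝ => -(α * z ^ β)) atTop atBot :=
        tendsto_neg_atTop_atBot.comp h1
      exact h2.congr (fun z => by ring)
    have h3 : Filter.Tendsto (fun z : ℝ => c₁ * Real.exp (-α * z ^ β)) atTop (𝓝 0) := by
      simpa using hexp0.const_mul c₁
    filter_upwards [hc₁.bound, h3.eventually_lt_const (by norm_num : (0:ℝ) < 1/2),
        eventually_gt_atTop 0] with z hb1 hb2 hz0
    have hI : 0 < Iser a z := Iser_pos a ha m hm hz0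
    have h0 : 0 ≤ sumGE a z (f.eval z * (1 + C * z ^ (-ν))) / Iser a z :=
      div_nonneg (sumGE_nonneg a ha hz0.le _) hI.le
    rw [Real.norm_eq_abs, Real.norm_eq_abs, abs_of_nonneg h0,
      abs_of_pos (Real.exp_pos _)] at hb1
    have h4 : sumGE a z (f.eval z * (1 + C * z ^ (-ν))) / Iser a z ≤ 1/2 := le_of_lt
      (lt_of_le_of_lt hb1 hb2)
    calc sumGE a z (f.eval z * (1 + C * z ^ (-ν)))
        = (sumGE a z (f.eval z * (1 + C * z ^ (-ν))) / Iser a z) * Iser a z := by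
          rw [div_mul_cancel₀ _ hI.ne']
      _ ≤ (1/2) * Iser a z := mul_le_mul_of_nonneg_right h4 hI.le
  rw [Asymptotics.isBigO_iff]
  refine ⟨B * (Q * c₁ + 2 * Real.exp K * c₂), ?_⟩
  filter_upwards [eventually_ge_atTop 1, hy_ge,
    feval_bounds f hlead, hy_tendsto.eventually (feval_bounds f hlead),
    Cx_small C ν hC hν, hy_tendsto.eventually (Cx_small C ν hC hν),
    hc₁.bound, hc₂.bound, hy_tendsto.eventually hhalf,
    poly_exp_small P (α - α') β (by linarith) hβ]
    with x h1 hyx hfx hfy hCx hCy hc1x hc2x hhalfy hsmall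
  simp only [Function.comp_apply] at hc2x
  have hx0 : (0:ℝ) < x := lt_of_lt_of_le one_pos h1
  have hy0 : (0:ℝ) < y x := lt_of_lt_of_le hx0 hyx
  set ε : ℝ := x ^ (-P) with hε
  have hε0 : 0 < ε := Real.rpow_pos_of_pos hx0 _
  have hε1 : ε ≤ 1 := Real.rpow_le_one_of_one_le_of_nonpos h1
    (by rw [hP]; exact neg_nonpos.mpr (by positivity))
  have hyx_eq : y x = x * (1 + ε) := rfl
  have hyx2 : y x ≤ 2 * x := by
    rw [hyx_eq]
    calc x * (1 + ε) ≤ x * 2 := mul_le_mul_of_nonneg_left (by linarith) hx0.le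
      _ = 2 * x := mul_comm x 2
  have hI : 0 < Iser a x := Iser_pos a ha m hm hx0
  have hIy : 0 < Iser a (y x) := Iser_pos a ha m hm hy0
  set gx : ℝ := f.eval x * (1 + C * x ^ (-ν)) with hgx
  set gy : ℝ := f.eval (y x) * (1 + C * (y x) ^ (-ν)) with hgy
  have hCy0 : 0 ≤ C * (y x) ^ (-ν) := by positivity
  have hgy_pos : 0 < gy := mul_pos hfy.2.2 (by linarith)
  set M : ℤ := ⌊gy⌋ with hM
  have hM0 : 0 ≤ M := Int.floor_nonneg.2 hgy_pos.le
  have hMR : (M:ℝ) ≤ gy := by rw [hM]; exact Int.floor_le gy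
  set Mn : ℕ := M.toNat with hMn
  have hMnM : (Mn:ℤ) = M := by rw [hMn]; exact Int.toNat_of_nonneg hM0
  have hMnR : (Mn:ℝ) ≤ gy := by
    have : ((Mn:ℤ):ℝ) = (M:ℝ) := by rw [hMnM]
    push_cast at this
    linarith [hMR, this.le, this.ge]
  -- growth bounds
  have hgy_le : gy ≤ 4 * lc * 2 ^ d * x ^ d := by
    have h2 : f.eval (y x) ≤ 2 * lc * (y x) ^ d := hfy.2.1
    have h3 : (y x) ^ d ≤ (2*x) ^ d := pow_le_pow_left₀ hy0.le hyx2 d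
    have h4 : 1 + C * (y x) ^ (-ν) ≤ 2 := by linarith
    have h5 : 0 < f.eval (y x) := hfy.2.2
    calc gy ≤ f.eval (y x) * 2 := by
          rw [hgy]; exact mul_le_mul_of_nonneg_left h4 h5.le
      _ ≤ (2 * lc * (2*x) ^ d) * 2 := by
          have h10 : 2 * lc * (y x) ^ d ≤ 2 * lc * (2*x) ^ d :=
            mul_le_mul_of_nonneg_left h3 (by positivity)
          exact mul_le_mul_of_nonneg_right (h2.trans h10) (by norm_num)
      _ = 4 * lc * 2 ^ d * x ^ d := by rw [mul_pow]; ring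
  have hεxd : ε * x ^ d ≤ 1 := by
    have heq : ε * x ^ d = x ^ ((-P) + (d:ℝ)) := by
      rw [hε, Real.rpow_add hx0, Real.rpow_natCast]
    rw [heq]
    apply Real.rpow_le_one_of_one_le_of_nonpos h1
    rw [hP]; push_cast; linarith
  have hεgy : ε * gy ≤ K := by
    calc ε * gy ≤ ε * (4 * lc * 2 ^ d * x ^ d) := mul_le_mul_of_nonneg_left hgy_le hε0.le
      _ = (4 * lc * 2 ^ d) * (ε * x ^ d) := by ring
      _ ≤ (4 * lc * 2 ^ d) * 1 := mul_le_mul_of_nonneg_left hεxd (by positivity)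
      _ = K := by rw [hK]; ring
  have hpowMn : (1+ε) ^ Mn ≤ Real.exp K := by
    calc (1+ε) ^ Mn ≤ (Real.exp ε) ^ Mn := by
          apply pow_le_pow_left₀ (by linarith)
          linarith [Real.add_one_le_exp ε]
      _ = Real.exp ((Mn:ℝ) * ε) := by rw [← Real.exp_nat_mul]
      _ ≤ Real.exp K := by
          apply Real.exp_le_exp.2
          calc (Mn:ℝ) * ε = ε * Mn := by ring
            _ ≤ ε * gy := mul_le_mul_of_nonneg_left hMnR hε0.le
            _ ≤ K := hεgy
  -- split of Iser a (y x)
  have hs1 : Summable fun n : ℕ => if (n:ℤ) < M then a n * (y x) ^ n else 0 :=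
    summable_ite a ha hy0 _
  have hs2 : Summable fun n : ℕ => if M ≤ (n:ℤ) then a n * (y x) ^ n else 0 :=
    summable_ite a ha hy0 _
  have hsplit : Iser a (y x) =
      (∑' n : ℕ, if (n:ℤ) < M then a n * (y x) ^ n else 0) + sumGE a (y x) gy := by
    rw [Iser, sumGE, ← hM, ← Summable.tsum_add hs1 hs2]
    apply tsum_congr
    intro n
    by_cases h : M ≤ (n:ℤ)
    · rw [if_neg (not_lt.2 h), if_pos h]; ring
    · rw [if_pos (not_le.1 h), if_neg h]; ring
  have hS1 : (∑' n : ℕ, if (n:ℤ) < M then a n * (y x) ^ n else 0) ≤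
      (1+ε) ^ Mn * Iser a x := by
    have hterm : ∀ n : ℕ, (if (n:ℤ) < M then a n * (y x) ^ n else 0) ≤
        (1+ε) ^ Mn * (a n * x ^ n) := by
      intro n
      have hax : 0 ≤ a n * x ^ n := mul_nonneg (ha.1 n) (pow_nonneg hx0.le n)
      split_ifs with h
      · have h' : (n:ℤ) < (Mn:ℤ) := by rw [hMnM]; exact h
        have h'' : n < Mn := by exact_mod_cast h'
        have hnMn : n ≤ Mn := h''.le
        have hyn : (y x) ^ n = x ^ n * (1+ε) ^ n := by rw [hyx_eq, mul_pow]
        have hp : (1+ε) ^ n ≤ (1+ε) ^ Mn := pow_le_pow_right₀ (by linarith) hnMn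
        calc a n * (y x) ^ n = (1+ε) ^ n * (a n * x ^ n) := by rw [hyn]; ring
          _ ≤ (1+ε) ^ Mn * (a n * x ^ n) := mul_le_mul_of_nonneg_right hp hax
      · exact mul_nonneg (by positivity) hax
    calc (∑' n : ℕ, if (n:ℤ) < M then a n * (y x) ^ n else 0)
        ≤ ∑' n : ℕ, (1+ε) ^ Mn * (a n * x ^ n) :=
          Summable.tsum_le_tsum hterm hs1 ((ha.2 x hx0).mul_left _)
      _ = (1+ε) ^ Mn * Iser a x := tsum_mul_left
  have hIy_le : Iser a (y x) ≤ 2 * Real.exp K * Iser a x := by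
    have h6 : Iser a (y x) ≤ 2 * ((1+ε) ^ Mn * Iser a x) := by
      rw [hsplit] at hhalfy ⊢
      linarith
    have h7 : (1+ε) ^ Mn * Iser a x ≤ Real.exp K * Iser a x :=
      mul_le_mul_of_nonneg_right hpowMn hI.le
    linarith
  -- weighted tail bound
  set N : ℤ := ⌊gx⌋ with hN
  have hM1 : (0:ℝ) ≤ (M:ℝ) + 1 := by
    have : (0:ℝ) ≤ (M:ℝ) := by exact_mod_cast hM0
    linarith
  have hterm2 : ∀ n : ℕ, (if N ≤ (n:ℤ) then (1+(n:ℝ)) * (a n * x ^ n) else 0) ≤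
      ((M:ℝ)+1) * (if N ≤ (n:ℤ) then a n * x ^ n else 0)
      + (1/ε) * (if M ≤ (n:ℤ) then a n * (y x) ^ n else 0) := by
    intro n
    have hax : 0 ≤ a n * x ^ n := mul_nonneg (ha.1 n) (pow_nonneg hx0.le n)
    have hay : 0 ≤ a n * (y x) ^ n := mul_nonneg (ha.1 n) (pow_nonneg hy0.le n)
    by_cases h1' : N ≤ (n:ℤ)
    · by_cases h2' : M ≤ (n:ℤ)
      · simp only [if_pos h1', if_pos h2']
        have hbn := bern ε hε0 hε1 n
        have h4 : (1+(n:ℝ)) ≤ (1+ε) ^ n / ε := (le_div_iff₀ hε0).2 (by linarith [hbn])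
        have h5 : (1+(n:ℝ)) * (a n * x ^ n) ≤ (1/ε) * (a n * (y x) ^ n) := by
          have hyn : (y x) ^ n = x ^ n * (1+ε) ^ n := by rw [hyx_eq, mul_pow]
          calc (1+(n:ℝ)) * (a n * x ^ n) ≤ ((1+ε) ^ n / ε) * (a n * x ^ n) :=
                mul_le_mul_of_nonneg_right h4 hax
            _ = (1/ε) * (a n * (y x) ^ n) := by rw [hyn]; ring
        linarith [mul_nonneg hM1 hax, h5]
      · simp only [if_pos h1', if_neg h2']
        push_neg at h2'
        have h6 : (1+(n:ℝ)) ≤ (M:ℝ) + 1 := by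
          have h7 : (n:ℤ) + 1 ≤ M := h2'
          have h8 : ((n:ℤ):ℝ) + 1 ≤ (M:ℝ) := by exact_mod_cast h7
          push_cast at h8
          linarith
        have := mul_le_mul_of_nonneg_right h6 hax
        linarith
    · simp only [if_neg h1']
      have h5 : 0 ≤ (if M ≤ (n:ℤ) then a n * (y x) ^ n else 0) := by
        split_ifs
        · exact hay
        · exact le_rfl
      have h6 := mul_nonneg (le_of_lt (by positivity : (0:ℝ) < 1/ε)) h5
      have h7 : 0 ≤ (if N ≤ (n:ℤ) then a n * x ^ n else 0) := by
        rw [if_neg h1']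
      linarith [mul_nonneg hM1 h7, h6]
  set W : ℝ := ∑' n : ℕ, (if N ≤ (n:ℤ) then (1+(n:ℝ)) * (a n * x ^ n) else 0) with hW
  have hWsum : Summable fun n : ℕ => (if N ≤ (n:ℤ) then (1+(n:ℝ)) * (a n * x ^ n) else 0) :=
    summable_ite_weight a ha hx0 _
  have hWle : W ≤ ((M:ℝ)+1) * sumGE a x gx + (1/ε) * sumGE a (y x) gy := by
    have hsa : Summable fun n : ℕ => ((M:ℝ)+1) * (if N ≤ (n:ℤ) then a n * x ^ n else 0) :=
      (summable_ite a ha hx0 _).mul_left _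
    have hsb : Summable fun n : ℕ => (1/ε) * (if M ≤ (n:ℤ) then a n * (y x) ^ n else 0) :=
      (summable_ite a ha hy0 _).mul_left _
    calc W ≤ ∑' n : ℕ, (((M:ℝ)+1) * (if N ≤ (n:ℤ) then a n * x ^ n else 0)
          + (1/ε) * (if M ≤ (n:ℤ) then a n * (y x) ^ n else 0)) :=
          Summable.tsum_le_tsum hterm2 hWsum (hsa.add hsb)
      _ = ((M:ℝ)+1) * sumGE a x gx + (1/ε) * sumGE a (y x) gy := by
          rw [Summable.tsum_add hsa hsb, tsum_mul_left, tsum_mul_left, sumGE, sumGE, ← hN, ← hM]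
  -- numerator bound
  have htermD : ∀ n : ℕ, ‖(if N ≤ (n:ℤ) then (b n * a n) * x ^ n else 0)‖ ≤
      B * (if N ≤ (n:ℤ) then (1+(n:ℝ)) * (a n * x ^ n) else 0) := by
    intro n
    have hax : 0 ≤ a n * x ^ n := mul_nonneg (ha.1 n) (pow_nonneg hx0.le n)
    split_ifs with h
    · have : ‖b n * a n * x ^ n‖ = |b n| * (a n * x ^ n) := by
        rw [Real.norm_eq_abs, mul_assoc, abs_mul, abs_of_nonneg hax]
      rw [this]
      calc |b n| * (a n * x ^ n) ≤ (B * (1 + n)) * (a n * x ^ n) :=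
            mul_le_mul_of_nonneg_right (hB n) hax
        _ = B * ((1+(n:ℝ)) * (a n * x ^ n)) := by ring
    · simp
  have hnormsum : Summable fun n : ℕ => ‖(if N ≤ (n:ℤ) then (b n * a n) * x ^ n else 0)‖ :=
    Summable.of_nonneg_of_le (fun n => norm_nonneg _) htermD (hWsum.mul_left B)
  have hnum : ‖sumGE (fun n => b n * a n) x gx‖ ≤ B * W := by
    rw [sumGE, ← hN]
    calc ‖∑' n : ℕ, (if N ≤ (n:ℤ) then (b n * a n) * x ^ n else 0)‖
        ≤ ∑' n : ℕ, ‖(if N ≤ (n:ℤ) then (b n * a n) * x ^ n else 0)‖ :=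
          norm_tsum_le_tsum_norm hnormsum
      _ ≤ ∑' n : ℕ, B * (if N ≤ (n:ℤ) then (1+(n:ℝ)) * (a n * x ^ n) else 0) :=
          Summable.tsum_le_tsum htermD hnormsum (hWsum.mul_left B)
      _ = B * W := tsum_mul_left
  -- ratio bounds
  have hTx0 : 0 ≤ sumGE a x gx := sumGE_nonneg a ha hx0.le _
  have hTy0 : 0 ≤ sumGE a (y x) gy := sumGE_nonneg a ha hy0.le _
  have hrx : sumGE a x gx ≤ c₁ * Real.exp (-α * x ^ β) * Iser a x := by
    have h0 : 0 ≤ sumGE a x gx / Iser a x := div_nonneg hTx0 hI.le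
    rw [Real.norm_eq_abs, Real.norm_eq_abs, abs_of_nonneg h0,
      abs_of_pos (Real.exp_pos _)] at hc1x
    calc sumGE a x gx = (sumGE a x gx / Iser a x) * Iser a x := by
          rw [div_mul_cancel₀ _ hI.ne']
      _ ≤ (c₁ * Real.exp (-α * x ^ β)) * Iser a x := mul_le_mul_of_nonneg_right hc1x hI.le
  have hry : sumGE a (y x) gy ≤ c₂ * Real.exp (-α * (y x) ^ β) * Iser a (y x) := by
    have h0 : 0 ≤ sumGE a (y x) gy / Iser a (y x) := div_nonneg hTy0 hIy.le
    rw [Real.norm_eq_abs, Real.norm_eq_abs, abs_of_nonneg h0,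
      abs_of_pos (Real.exp_pos _)] at hc2x
    calc sumGE a (y x) gy = (sumGE a (y x) gy / Iser a (y x)) * Iser a (y x) := by
          rw [div_mul_cancel₀ _ hIy.ne']
      _ ≤ (c₂ * Real.exp (-α * (y x) ^ β)) * Iser a (y x) :=
          mul_le_mul_of_nonneg_right hc2x hIy.le
  have hexpy : Real.exp (-α * (y x) ^ β) ≤ Real.exp (-α * x ^ β) := by
    apply Real.exp_le_exp.2
    have h2 : x ^ β ≤ (y x) ^ β := Real.rpow_le_rpow hx0.le hyx hβ.le
    have h3 := mul_le_mul_of_nonneg_left h2 hα.le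
    linarith
  -- size bounds
  have hxP1 : (1:ℝ) ≤ x ^ P := Real.one_le_rpow h1 (by rw [hP]; positivity)
  have hxdP : x ^ d ≤ x ^ P := by
    rw [← Real.rpow_natCast x d]
    exact Real.rpow_le_rpow_of_exponent_le h1 (by rw [hP]; linarith)
  have hMP : (M:ℝ) + 1 ≤ Q * x ^ P := by
    have h8 : (0:ℝ) ≤ 4 * lc * 2 ^ d := by positivity
    have h9 := mul_le_mul_of_nonneg_left hxdP h8
    rw [hQ]
    linarith [hMR, hgy_le, h9, hxP1]
  have hinvε : 1/ε = x ^ P := by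
    rw [hε, Real.rpow_neg hx0.le, one_div, inv_inv]
  -- assembly
  set e₁ : ℝ := Real.exp (-α * x ^ β) with he₁
  have he₁0 : 0 < e₁ := Real.exp_pos _
  have hTy2 : sumGE a (y x) gy ≤ 2 * Real.exp K * c₂ * e₁ * Iser a x := by
    calc sumGE a (y x) gy ≤ c₂ * Real.exp (-α * (y x) ^ β) * Iser a (y x) := hry
      _ ≤ c₂ * e₁ * Iser a (y x) := by
          apply mul_le_mul_of_nonneg_right _ hIy.le
          exact mul_le_mul_of_nonneg_left hexpy hc₂0.le
      _ ≤ c₂ * e₁ * (2 * Real.exp K * Iser a x) := by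
          apply mul_le_mul_of_nonneg_left hIy_le
          positivity
      _ = 2 * Real.exp K * c₂ * e₁ * Iser a x := by ring
  have hWfinal : W ≤ (Q * c₁ + 2 * Real.exp K * c₂) * x ^ P * e₁ * Iser a x := by
    have p1 : ((M:ℝ)+1) * sumGE a x gx ≤ (Q * x ^ P) * (c₁ * e₁ * Iser a x) :=
      mul_le_mul hMP hrx hTx0 (by positivity)
    have p2 : (1/ε) * sumGE a (y x) gy ≤ x ^ P * (2 * Real.exp K * c₂ * e₁ * Iser a x) := by
      rw [hinvε]
      exact mul_le_mul_of_nonneg_left hTy2 (by positivity)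
    calc W ≤ ((M:ℝ)+1) * sumGE a x gx + (1/ε) * sumGE a (y x) gy := hWle
      _ ≤ (Q * x ^ P) * (c₁ * e₁ * Iser a x)
          + x ^ P * (2 * Real.exp K * c₂ * e₁ * Iser a x) := add_le_add p1 p2
      _ = (Q * c₁ + 2 * Real.exp K * c₂) * x ^ P * e₁ * Iser a x := by ring
  -- conclude
  have hLHS : ‖sumGE (fun n => b n * a n) x gx / Iser a x‖ =
      ‖sumGE (fun n => b n * a n) x gx‖ / Iser a x := by
    rw [norm_div, Real.norm_eq_abs (Iser a x), abs_of_pos hI]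
  rw [hLHS]
  have hexpsplit : e₁ = Real.exp (-(α - α') * x ^ β) * Real.exp (-α' * x ^ β) := by
    rw [he₁, ← Real.exp_add]; ring_nf
  have hQc : (0:ℝ) < Q * c₁ + 2 * Real.exp K * c₂ := by positivity
  calc ‖sumGE (fun n => b n * a n) x gx‖ / Iser a x
      ≤ (B * ((Q * c₁ + 2 * Real.exp K * c₂) * x ^ P * e₁ * Iser a x)) / Iser a x := by
        have hh : ‖sumGE (fun n => b n * a n) x gx‖ ≤
            B * ((Q * c₁ + 2 * Real.exp K * c₂) * x ^ P * e₁ * Iser a x) :=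
          le_trans hnum (mul_le_mul_of_nonneg_left hWfinal (by linarith))
        exact (div_le_div_iff_of_pos_right hI).2 hh
      _ = B * (Q * c₁ + 2 * Real.exp K * c₂) * (x ^ P * e₁) := by
        field_simp [hI.ne']
      _ = B * (Q * c₁ + 2 * Real.exp K * c₂) *
            (x ^ P * Real.exp (-(α - α') * x ^ β)) * Real.exp (-α' * x ^ β) := by
        rw [hexpsplit]; ring
      _ ≤ B * (Q * c₁ + 2 * Real.exp K * c₂) * 1 * Real.exp (-α' * x ^ β) := by
        apply mul_le_mul_of_nonneg_right _ (Real.exp_pos _).le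
        apply mul_le_mul_of_nonneg_left hsmall
        positivity
      _ ≤ B * (Q * c₁ + 2 * Real.exp K * c₂) * ‖Real.exp (-α' * x ^ β)‖ := by
        rw [Real.norm_eq_abs, abs_of_pos (Real.exp_pos _), mul_one]

theorem stmt10 (a b : ℕ → ℝ) (f : Polynomial ℝ) (C ν α β : ℝ)
    (hC : 0 < C) (hν : 0 < ν) (hα : 0 < α) (hβ : 0 < β)
    (ha : AbsMono a) (hne : ∃ n, a n ≠ 0) (hlead : 0 < f.leadingCoeff)
    (hconc : ExpConc a (fun x => f.eval x) C ν α β) (hb : Subpoly b) :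
    ∀ α' : ℝ, 0 < α' → α' < α →
      ((fun x : ℝ =>
          sumLE (fun n => b n * a n) x (f.eval x * (1 - C * x ^ (-ν))) / Iser a x)
        =O[atTop] fun x : ℝ => Real.exp (-α' * x ^ β)) ∧
      ((fun x : ℝ =>
          sumGE (fun n => b n * a n) x (f.eval x * (1 + C * x ^ (-ν))) / Iser a x)
        =O[atTop] fun x : ℝ => Real.exp (-α' * x ^ β)) := by
  intro α' hα'0 hα'α
  obtain ⟨B, hB0, hB⟩ := exists_B b hb
  obtain ⟨m, hm⟩ := hne
  exact ⟨head_aux a b f C ν α β hC hν hα hβ ha m hm hlead hconc.1 B hB0 hB α' hα'0 hα'α,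
         tail_aux a b f C ν α β hC hν hα hβ ha m hm hlead hconc.2 B hB0 hB α' hα'0 hα'α⟩
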